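/- (Corollary 3.2): For every p with 0 < p < ∞ there exists a constant C_p > 0, depending only on p and independent of d and m, such that for all d ∈ ℕ (d ≥ 1) and all real m ≥ 1: ln(#{h ∈ ℤ^d : Σ_{k=1}^d |h_k|^p ≤ m}) ≤ C_p · d · (ln(2d) + ln(2m)). -/

import Mathlib

noncomputable section

/-- Corollary 3.2: for every `0 < p < ∞` there is a constant `C_p > 0`, independent
of `d` and `m`, such that for all `d ≥ 1` and real `m ≥ 1`,
`ln #{h ∈ ℤ^d : ∑ |h_k|^p ≤ m} ≤ C_p · d · (ln(2d) + ln(2m))`. -/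
theorem cor3_2 (p : ℝ) (hp : 0 < p) :
    ∃ C > 0, ∀ (d : ℕ), 1 ≤ d → ∀ (m : ℝ), 1 ≤ m →
      Real.log (Set.ncard {h : Fin d → ℤ | ∑ k, (|h k| : ℝ) ^ p ≤ m}) ≤
        C * d * (Real.log (2 * d) + Real.log (2 * m)) := by
  refine ⟨3 + 1/p, by positivity, ?_⟩
  intro d hd m hm
  set N : ℕ := ⌈m ^ (1/p)⌉₊ with hN
  have hm0 : (0:ℝ) < m := lt_of_lt_of_le one_pos hm
  have hm1 : (1:ℝ) ≤ m ^ (1/p) := Real.one_le_rpow hm (by positivity)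
  set S := {h : Fin d → ℤ | ∑ k, (|h k| : ℝ) ^ p ≤ m} with hS
  set F := Fintype.piFinset fun _ : Fin d => Finset.Icc (-(N:ℤ)) N with hF
  have hsub : S ⊆ ↑F := by
    intro h hh
    simp only [hF, Finset.mem_coe, Fintype.mem_piFinset, Finset.mem_Icc]
    intro k
    have h1 : (|h k| : ℝ) ^ p ≤ m := by
      refine le_trans ?_ hh
      exact Finset.single_le_sum (f := fun i => (|h i| : ℝ) ^ p)
        (fun i _ => Real.rpow_nonneg (by positivity) p) (Finset.mem_univ k)
    have h2 : (|h k| : ℝ) ≤ m ^ (1/p) := by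
      have := Real.rpow_le_rpow (Real.rpow_nonneg (by positivity) p) h1
        (le_of_lt (by positivity : (0:ℝ) < 1/p))
      rw [one_div]; rw [one_div] at this; rwa [Real.rpow_rpow_inv (by positivity) hp.ne'] at this
    have h3 : (|h k| : ℝ) ≤ (N : ℝ) := h2.trans (Nat.le_ceil _)
    have h4 : |h k| ≤ (N : ℤ) := by exact_mod_cast h3
    exact abs_le.mp h4
  have hcard : (S.ncard : ℝ) ≤ ((2 * N + 1 : ℕ) : ℝ) ^ d := by
    have h1 : S.ncard ≤ F.card := by
      rw [← Set.ncard_coe_finset]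
      exact Set.ncard_le_ncard hsub F.finite_toSet
    have h2 : F.card = (2 * N + 1) ^ d := by
      rw [hF, Fintype.card_piFinset]
      have : (Finset.Icc (-(N:ℤ)) N).card = 2 * N + 1 := by
        rw [Int.card_Icc]
        simp [Int.toNat_natCast]
        omega
      simp [this]
    calc ((S.ncard : ℝ)) ≤ (F.card : ℝ) := by exact_mod_cast h1
      _ = _ := by rw [h2]; push_cast; ring
  have h0S : (0 : Fin d → ℤ) ∈ S := by
    simp only [hS, Set.mem_setOf_eq, Pi.zero_apply, abs_zero, Int.cast_zero]
    rw [Real.zero_rpow hp.ne']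
    simpa using hm0.le
  have hfin : S.Finite := Set.Finite.subset F.finite_toSet hsub
  have hpos : 0 < S.ncard := (Set.ncard_pos hfin).mpr ⟨0, h0S⟩
  have hlog1 : Real.log S.ncard ≤ Real.log (((2 * N + 1 : ℕ) : ℝ) ^ d) :=
    Real.log_le_log (by exact_mod_cast hpos) hcard
  have hbox : ((2 * N + 1 : ℕ) : ℝ) ≤ 8 * m ^ (1/p) := by
    have hNle : (N : ℝ) ≤ m ^ (1/p) + 1 := le_of_lt (Nat.ceil_lt_add_one (by positivity))
    push_cast
    nlinarith
  have hlog2 : Real.log (((2 * N + 1 : ℕ) : ℝ) ^ d) = d * Real.log ((2 * N + 1 : ℕ) : ℝ) := by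
    rw [Real.log_pow]
  have hlog3 : Real.log ((2 * N + 1 : ℕ) : ℝ) ≤ 3 * Real.log 2 + (1/p) * Real.log m := by
    have h1 : Real.log ((2 * N + 1 : ℕ) : ℝ) ≤ Real.log (8 * m ^ (1/p)) :=
      Real.log_le_log (by positivity) hbox
    have h2 : Real.log (8 * m ^ (1/p)) = 3 * Real.log 2 + (1/p) * Real.log m := by
      rw [Real.log_mul (by norm_num) (by positivity), Real.log_rpow hm0]
      have : (8:ℝ) = 2 ^ 3 := by norm_num
      rw [this, Real.log_pow]
      push_cast; ring
    linarith
  have hlogd : Real.log 2 ≤ Real.log (2 * d) := by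
    apply Real.log_le_log (by norm_num)
    have : (1:ℝ) ≤ d := by exact_mod_cast hd
    nlinarith
  have hlogm : Real.log m ≤ Real.log (2 * m) := by
    apply Real.log_le_log hm0
    nlinarith
  have hA : 0 ≤ Real.log (2 * d) := le_trans (by positivity : (0:ℝ) ≤ Real.log 2) hlogd
  have hB : 0 ≤ Real.log (2 * m) := Real.log_nonneg (by nlinarith)
  have hd1 : (1:ℝ) ≤ d := by exact_mod_cast hd
  calc Real.log S.ncard ≤ d * Real.log ((2 * N + 1 : ℕ) : ℝ) := by rw [← hlog2]; exact hlog1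
    _ ≤ d * (3 * Real.log (2 * d) + (1/p) * Real.log (2 * m)) := by
        apply mul_le_mul_of_nonneg_left _ (by positivity)
        have := hlog3
        have hp' : 0 < 1/p := by positivity
        nlinarith [mul_le_mul_of_nonneg_left hlogm hp'.le]
    _ ≤ (3 + 1/p) * d * (Real.log (2 * d) + Real.log (2 * m)) := by
        have hp' : 0 < 1/p := by positivity
        nlinarith [mul_nonneg hA (le_of_lt hp'), mul_nonneg hB (le_of_lt hp'),
          mul_nonneg (mul_nonneg (by positivity : (0:ℝ) ≤ (d:ℝ)) hA) hp'.le,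
          mul_nonneg (mul_nonneg (by positivity : (0:ℝ) ≤ (d:ℝ)) hB) hp'.le]
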